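/- Let α > 0 and let s satisfy α < s ≤ α + 1 and s > 1. For 0 < r ≤ 1 define I(r) := ∫∫_{{(x,y) : |x−y| ≤ 1/r}} ⟨x⟩^{−2s} |x−y|^{2α} ⟨y⟩^{−2s} m(dy) m(dx). Then as r ↓ 0: if α < s < α + 1 one has I(r) = O(r^{2(s−α−1)}), while if s = α + 1 one has I(r) = O(log(1/r)). In particular I(r) is finite for each such r. -/

import Mathlib

open MeasureTheory

/- The squared Hilbert–Schmidt norm of the operator with convolution kernel
`1_{|x| ≤ 1/r} |x|^α` from `𝓗_s` to `𝓗_{−s}`. -/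
noncomputable def stmt7I (s α r : ℝ) : ENNReal :=
  ∫⁻ x : EuclideanSpace ℝ (Fin 2),
    ∫⁻ y in {y : EuclideanSpace ℝ (Fin 2) | ‖x - y‖ ≤ 1 / r},
      ENNReal.ofReal ((1 + ‖x‖ ^ 2) ^ (-s) * ‖x - y‖ ^ (2 * α) * (1 + ‖y‖ ^ 2) ^ (-s))

namespace Stmt7Aux

open Real Set Metric Filter

local notation "E2" => EuclideanSpace ℝ (Fin 2)

noncomputable def Bint (s : ℝ) : ENNReal :=
  ∫⁻ x : E2, ENNReal.ofReal ((1 + ‖x‖ ^ 2) ^ (-s))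

noncomputable def Aint (s α R : ℝ) : ENNReal :=
  ∫⁻ x : E2, ENNReal.ofReal ((1 + ‖x‖ ^ 2) ^ (-s) *
    min R (2 * Real.sqrt (1 + ‖x‖ ^ 2)) ^ (2 * α))

lemma norm_le_sqrt' (x : E2) : ‖x‖ ≤ Real.sqrt (1 + ‖x‖ ^ 2) := by
  nlinarith [Real.sq_sqrt (show (0:ℝ) ≤ 1 + ‖x‖^2 by positivity),
    Real.sqrt_nonneg (1 + ‖x‖^2), norm_nonneg x]

lemma Bint_lt_top {s : ℝ} (hs : 1 < s) : Bint s < ⊤ := by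
  have h2s : (Module.finrank ℝ (EuclideanSpace ℝ (Fin 2)) : ℝ) < 2 * s := by
    rw [finrank_euclideanSpace_fin]; push_cast; linarith
  have hb : Bint s ≤ ∫⁻ x : E2,
      ENNReal.ofReal ((2:ℝ) ^ ((2*s)/2)) * ENNReal.ofReal ((1 + ‖x‖) ^ (-(2*s))) := by
    refine lintegral_mono fun x => ?_
    rw [← ENNReal.ofReal_mul (by positivity)]
    refine ENNReal.ofReal_le_ofReal ?_
    have h := rpow_neg_one_add_norm_sq_le (x : E2) (r := 2*s) (by linarith)
    have he : -s = -(2*s)/2 := by ring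
    rw [he]; exact h
  refine lt_of_le_of_lt hb ?_
  rw [lintegral_const_mul' _ _ ENNReal.ofReal_ne_top]
  exact ENNReal.mul_lt_top ENNReal.ofReal_lt_top (finite_integral_one_add_norm h2s)

lemma key_polar (f : ℝ → ℝ) (hf : Integrable (fun x : E2 => f ‖x‖))
    (h0 : ∀ y, 0 ≤ f y) :
    ∫⁻ x : E2, ENNReal.ofReal (f ‖x‖) =
      ENNReal.ofReal (2 * ((volume (ball (0:E2) 1)).toReal *
        ∫ y in Ioi (0:ℝ), y * f y)) := by
  rw [← ofReal_integral_eq_lintegral_ofReal hf (Filter.Eventually.of_forall fun x => h0 _)]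
  congr 1
  rw [integral_fun_norm_addHaar (volume : Measure E2) f]
  rw [finrank_euclideanSpace_fin, nsmul_eq_mul, smul_eq_mul]
  push_cast
  congr 1
  congr 1
  refine setIntegral_congr_fun measurableSet_Ioi fun y hy => ?_
  simp [pow_one]

lemma ann_eq {p T : ℝ} (hp : p ≤ 0) (hT : 1 ≤ T) :
    ∫⁻ x : E2 in {x : E2 | ‖x‖ ∈ Icc 1 T}, ENNReal.ofReal (‖x‖ ^ p) =
      ENNReal.ofReal (2 * ((volume (ball (0:E2) 1)).toReal *
        ∫ y in (1:ℝ)..T, y ^ (p+1))) := by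
  have hS : MeasurableSet {x : E2 | ‖x‖ ∈ Icc 1 T} :=
    measurable_norm measurableSet_Icc
  set f : ℝ → ℝ := (Icc (1:ℝ) T).indicator (fun y => y ^ p) with hf_def
  have hfx : ∀ x : E2, f ‖x‖ = ({x : E2 | ‖x‖ ∈ Icc 1 T}).indicator
      (fun x : E2 => ‖x‖ ^ p) x := by
    intro x
    rw [hf_def]
    by_cases hx : ‖x‖ ∈ Icc 1 T
    · rw [Set.indicator_of_mem hx,
        Set.indicator_of_mem (show x ∈ {x : E2 | ‖x‖ ∈ Icc 1 T} from hx)]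
    · rw [Set.indicator_of_notMem hx,
        Set.indicator_of_notMem (show x ∉ {x : E2 | ‖x‖ ∈ Icc 1 T} from hx)]
  have hint : Integrable (fun x : E2 => f ‖x‖) := by
    simp only [hfx]
    rw [integrable_indicator_iff hS]
    refine Measure.integrableOn_of_bounded (M := 1) ?_ ?_ ?_
    · refine (lt_of_le_of_lt (measure_mono ?_)
        (measure_closedBall_lt_top (x := (0:E2)) (r := T))).ne
      intro x hx
      exact mem_closedBall_zero_iff.2 hx.2
    · exact (by fun_prop : Measurable fun x : E2 => ‖x‖ ^ p).aestronglyMeasurable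
    · filter_upwards [ae_restrict_mem hS] with x hx
      rw [Real.norm_of_nonneg (rpow_nonneg (norm_nonneg _) _)]
      exact rpow_le_one_of_one_le_of_nonpos hx.1 hp
  have h0 : ∀ y, 0 ≤ f y := fun y =>
    Set.indicator_nonneg (fun z hz => rpow_nonneg (le_trans zero_le_one hz.1) _) _
  have hL : ∫⁻ x : E2 in {x : E2 | ‖x‖ ∈ Icc 1 T}, ENNReal.ofReal (‖x‖ ^ p)
      = ∫⁻ x : E2, ENNReal.ofReal (f ‖x‖) := by
    rw [← lintegral_indicator hS]
    congr 1
    funext x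
    rw [hfx x]
    by_cases hx : x ∈ {x : E2 | ‖x‖ ∈ Icc 1 T}
    · rw [Set.indicator_of_mem hx, Set.indicator_of_mem hx]
    · rw [Set.indicator_of_notMem hx, Set.indicator_of_notMem hx, ENNReal.ofReal_zero]
  rw [hL, key_polar f hint h0]
  congr 2
  have hstep : ∀ y ∈ Ioi (0:ℝ), y * f y =
      (Icc (1:ℝ) T).indicator (fun y => y ^ (p+1)) y := by
    intro y hy
    by_cases hm : y ∈ Icc 1 T
    · simp only [hf_def, Set.indicator_of_mem hm]
      rw [rpow_add_one (mem_Ioi.1 hy).ne']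
      ring
    · simp [hf_def, Set.indicator_of_notMem hm]
  have hsub : Icc (1:ℝ) T ⊆ Ioi 0 :=
    fun y hy => lt_of_lt_of_le zero_lt_one hy.1
  have hinter : Ioi (0:ℝ) ∩ Icc (1:ℝ) T = Icc 1 T :=
    inter_eq_self_of_subset_right hsub
  rw [setIntegral_congr_fun measurableSet_Ioi hstep,
    setIntegral_indicator measurableSet_Icc, hinter,
    integral_Icc_eq_integral_Ioc, ← intervalIntegral.integral_of_le hT]

lemma tail_eq {q T : ℝ} (hq : q < -2) (hT : 1 ≤ T) :
    ∫⁻ x : E2 in {x : E2 | ‖x‖ ∈ Ici T}, ENNReal.ofReal (‖x‖ ^ q) =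
      ENNReal.ofReal (2 * ((volume (ball (0:E2) 1)).toReal *
        ∫ y in Ioi T, y ^ (q+1))) := by
  have hS : MeasurableSet {x : E2 | ‖x‖ ∈ Ici T} :=
    measurable_norm measurableSet_Ici
  set f : ℝ → ℝ := (Ici T).indicator (fun y => y ^ q) with hf_def
  have hfx : ∀ x : E2, f ‖x‖ = ({x : E2 | ‖x‖ ∈ Ici T}).indicator
      (fun x : E2 => ‖x‖ ^ q) x := by
    intro x
    rw [hf_def]
    by_cases hx : ‖x‖ ∈ Ici T
    · rw [Set.indicator_of_mem hx,
        Set.indicator_of_mem (show x ∈ {x : E2 | ‖x‖ ∈ Ici T} from hx)]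
    · rw [Set.indicator_of_notMem hx,
        Set.indicator_of_notMem (show x ∉ {x : E2 | ‖x‖ ∈ Ici T} from hx)]
  have hmaj : ∀ x : E2, ‖x‖ ∈ Ici T → ‖x‖ ^ q ≤ 2 ^ (-q) * (1 + ‖x‖) ^ q := by
    intro x hx
    have hx1 : (1:ℝ) ≤ ‖x‖ := le_trans hT hx
    have hxpos : (0:ℝ) < ‖x‖ := lt_of_lt_of_le zero_lt_one hx1
    have h1 : ((2:ℝ) * ‖x‖) ^ q ≤ (1 + ‖x‖) ^ q :=
      rpow_le_rpow_of_nonpos (by positivity) (by linarith) (by linarith)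
    rw [mul_rpow (by norm_num) (norm_nonneg x)] at h1
    have h2 := mul_le_mul_of_nonneg_left h1 (le_of_lt (rpow_pos_of_pos two_pos (-q)))
    rwa [← mul_assoc, ← rpow_add two_pos, neg_add_cancel, rpow_zero, one_mul] at h2
  have hint : Integrable (fun x : E2 => f ‖x‖) := by
    have hg : Integrable (fun x : E2 => 2 ^ (-q) * (1 + ‖x‖) ^ q) := by
      have : ((Module.finrank ℝ (EuclideanSpace ℝ (Fin 2))):ℝ) < -q := by
        simp only [finrank_euclideanSpace_fin]; push_cast; linarith
      simpa [neg_neg] using (integrable_one_add_norm (μ := (volume : Measure E2))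
        this).const_mul ((2:ℝ) ^ (-q))
    refine hg.mono' ?_ (Filter.Eventually.of_forall fun x => ?_)
    · exact (((by fun_prop : Measurable fun x : E2 => ‖x‖ ^ q).indicator
        hS).aestronglyMeasurable).congr
        (Filter.Eventually.of_forall fun x => (hfx x).symm)
    · by_cases hx : ‖x‖ ∈ Ici T
      · rw [hf_def, Set.indicator_of_mem hx,
          Real.norm_of_nonneg (rpow_nonneg (norm_nonneg _) _)]
        exact hmaj x hx
      · rw [hf_def, Set.indicator_of_notMem hx, norm_zero]
        positivity
  have h0 : ∀ y, 0 ≤ f y := fun y =>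
    Set.indicator_nonneg (fun z hz => rpow_nonneg (le_trans (le_trans zero_le_one hT) hz) _) _
  have hL : ∫⁻ x : E2 in {x : E2 | ‖x‖ ∈ Ici T}, ENNReal.ofReal (‖x‖ ^ q)
      = ∫⁻ x : E2, ENNReal.ofReal (f ‖x‖) := by
    rw [← lintegral_indicator hS]
    congr 1
    funext x
    rw [hfx x]
    by_cases hx : x ∈ {x : E2 | ‖x‖ ∈ Ici T}
    · rw [Set.indicator_of_mem hx, Set.indicator_of_mem hx]
    · rw [Set.indicator_of_notMem hx, Set.indicator_of_notMem hx, ENNReal.ofReal_zero]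
  rw [hL, key_polar f hint h0]
  congr 2
  have hstep : ∀ y ∈ Ioi (0:ℝ), y * f y =
      (Ici T).indicator (fun y => y ^ (q+1)) y := by
    intro y hy
    by_cases hm : y ∈ Ici T
    · simp only [hf_def, Set.indicator_of_mem hm]
      rw [rpow_add_one (mem_Ioi.1 hy).ne']
      ring
    · simp [hf_def, Set.indicator_of_notMem hm]
  have hsub : Ici T ⊆ Ioi (0:ℝ) :=
    fun y hy => lt_of_lt_of_le (lt_of_lt_of_le zero_lt_one hT) hy
  have hinter : Ioi (0:ℝ) ∩ Ici T = Ici T := inter_eq_self_of_subset_right hsub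
  rw [setIntegral_congr_fun measurableSet_Ioi hstep,
    setIntegral_indicator measurableSet_Ici, hinter, integral_Ici_eq_integral_Ioi]

lemma key_ptwise {α R : ℝ} (hα : 0 < α) (hR : 0 < R) (x y : E2)
    (hxy : ‖x - y‖ ≤ R) :
    ‖x - y‖ ^ (2 * α) ≤ min R (2 * Real.sqrt (1 + ‖x‖ ^ 2)) ^ (2 * α) +
      min R (2 * Real.sqrt (1 + ‖y‖ ^ 2)) ^ (2 * α) := by
  set a := Real.sqrt (1 + ‖x‖ ^ 2) with ha
  set b := Real.sqrt (1 + ‖y‖ ^ 2) with hb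
  have hxa : ‖x‖ ≤ a := norm_le_sqrt' x
  have hyb : ‖y‖ ≤ b := norm_le_sqrt' y
  have hd : ‖x - y‖ ≤ ‖x‖ + ‖y‖ := norm_sub_le x y
  rcases le_total a b with hab | hab
  · have h1 : ‖x - y‖ ≤ min R (2 * b) := le_min hxy (by linarith)
    have h2 : ‖x - y‖ ^ (2*α) ≤ min R (2 * b) ^ (2*α) :=
      Real.rpow_le_rpow (norm_nonneg _) h1 (by positivity)
    have h3 : (0:ℝ) ≤ min R (2 * a) ^ (2*α) :=
      Real.rpow_nonneg (le_min hR.le (by positivity)) _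
    linarith
  · have h1 : ‖x - y‖ ≤ min R (2 * a) := le_min hxy (by linarith)
    have h2 : ‖x - y‖ ^ (2*α) ≤ min R (2 * a) ^ (2*α) :=
      Real.rpow_le_rpow (norm_nonneg _) h1 (by positivity)
    have h3 : (0:ℝ) ≤ min R (2 * b) ^ (2*α) :=
      Real.rpow_nonneg (le_min hR.le (by positivity)) _
    linarith

lemma master {s α r : ℝ} (hα : 0 < α) (hr : 0 < r)
    (hB : Bint s ≠ ⊤) (hA : Aint s α (1/r) ≠ ⊤) :
    stmt7I s α r ≤ 2 * Aint s α (1/r) * Bint s := by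
  set R := 1/r with hRdef
  have hR : 0 < R := by positivity
  have houter : ∀ x : E2,
      (∫⁻ y in {y : E2 | ‖x - y‖ ≤ R},
        ENNReal.ofReal ((1 + ‖x‖ ^ 2) ^ (-s) * ‖x - y‖ ^ (2 * α) * (1 + ‖y‖ ^ 2) ^ (-s)))
      ≤ ENNReal.ofReal ((1 + ‖x‖ ^ 2) ^ (-s) * min R (2 * Real.sqrt (1 + ‖x‖ ^ 2)) ^ (2*α))
          * Bint s
        + ENNReal.ofReal ((1 + ‖x‖ ^ 2) ^ (-s)) * Aint s α R := by
    intro x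
    set wx := (1 + ‖x‖ ^ 2) ^ (-s) with hwx
    have hwx0 : 0 ≤ wx := Real.rpow_nonneg (by positivity) _
    set φx := min R (2 * Real.sqrt (1 + ‖x‖ ^ 2)) ^ (2*α) with hφx
    have hφx0 : 0 ≤ φx := Real.rpow_nonneg (le_min hR.le (by positivity)) _
    have hstep1 : (∫⁻ y in {y : E2 | ‖x - y‖ ≤ R},
        ENNReal.ofReal (wx * ‖x - y‖ ^ (2 * α) * (1 + ‖y‖ ^ 2) ^ (-s)))
        ≤ ∫⁻ y : E2, (ENNReal.ofReal (wx * φx * (1 + ‖y‖ ^ 2) ^ (-s)) +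
            ENNReal.ofReal (wx * ((1 + ‖y‖ ^ 2) ^ (-s) *
              min R (2 * Real.sqrt (1 + ‖y‖ ^ 2)) ^ (2*α)))) := by
      refine le_trans (setLIntegral_mono' ?_ ?_) (setLIntegral_le_lintegral _ _)
      · exact measurableSet_le (by fun_prop) measurable_const
      · intro y hy
        have hwy0 : (0:ℝ) ≤ (1 + ‖y‖ ^ 2) ^ (-s) := Real.rpow_nonneg (by positivity) _
        have hφy0 : (0:ℝ) ≤ min R (2 * Real.sqrt (1 + ‖y‖ ^ 2)) ^ (2*α) :=
          Real.rpow_nonneg (le_min hR.le (by positivity)) _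
        have hkey := key_ptwise hα hR x y hy
        calc ENNReal.ofReal (wx * ‖x - y‖ ^ (2 * α) * (1 + ‖y‖ ^ 2) ^ (-s))
            ≤ ENNReal.ofReal (wx * φx * (1 + ‖y‖ ^ 2) ^ (-s) +
                wx * ((1 + ‖y‖ ^ 2) ^ (-s) *
                  min R (2 * Real.sqrt (1 + ‖y‖ ^ 2)) ^ (2*α))) := by
              refine ENNReal.ofReal_le_ofReal ?_
              have h1 : wx * ‖x - y‖ ^ (2 * α) * (1 + ‖y‖ ^ 2) ^ (-s)
                  ≤ wx * (φx + min R (2 * Real.sqrt (1 + ‖y‖ ^ 2)) ^ (2*α))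
                    * (1 + ‖y‖ ^ 2) ^ (-s) :=
                mul_le_mul_of_nonneg_right
                  (mul_le_mul_of_nonneg_left hkey hwx0) hwy0
              nlinarith [h1]
          _ = _ := ENNReal.ofReal_add (by positivity) (by positivity)
    refine le_trans hstep1 ?_
    rw [lintegral_add_left' (by fun_prop)]
    have e1 : (∫⁻ y : E2, ENNReal.ofReal (wx * φx * (1 + ‖y‖ ^ 2) ^ (-s)))
        = ENNReal.ofReal (wx * φx) * Bint s := by
      rw [Bint, ← lintegral_const_mul' _ _ ENNReal.ofReal_ne_top]
      congr 1; funext y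
      rw [← ENNReal.ofReal_mul (by positivity)]
    have e2 : (∫⁻ y : E2, ENNReal.ofReal (wx * ((1 + ‖y‖ ^ 2) ^ (-s) *
        min R (2 * Real.sqrt (1 + ‖y‖ ^ 2)) ^ (2*α))))
        = ENNReal.ofReal wx * Aint s α R := by
      rw [Aint, ← lintegral_const_mul' _ _ ENNReal.ofReal_ne_top]
      congr 1; funext y
      rw [← ENNReal.ofReal_mul hwx0]
    rw [e1, e2]
  set G : E2 → ENNReal := fun x =>
    ENNReal.ofReal ((1 + ‖x‖ ^ 2) ^ (-s) * min R (2 * Real.sqrt (1 + ‖x‖ ^ 2)) ^ (2*α))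
        * Bint s
      + ENNReal.ofReal ((1 + ‖x‖ ^ 2) ^ (-s)) * Aint s α R with hG
  have h1 : stmt7I s α r ≤ ∫⁻ x : E2, G x := by
    rw [stmt7I]
    exact lintegral_mono fun x => houter x
  have h2 : (∫⁻ x : E2, G x) = Aint s α R * Bint s + Bint s * Aint s α R := by
    rw [hG]
    rw [lintegral_add_left' (by fun_prop)]
    rw [lintegral_mul_const' _ _ hB, lintegral_mul_const' _ _ hA]
    rfl
  refine le_trans h1 ?_
  rw [h2]
  rw [show (2 : ENNReal) * Aint s α R * Bint s
    = Aint s α R * Bint s + Aint s α R * Bint s by ring]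
  exact add_le_add le_rfl (le_of_eq (mul_comm _ _))

lemma Aint_crude {s α R : ℝ} (hα : 0 < α) (hR : 0 < R) :
    Aint s α R ≤ ENNReal.ofReal (R ^ (2*α)) * Bint s := by
  rw [Aint, Bint, ← lintegral_const_mul' _ _ ENNReal.ofReal_ne_top]
  refine lintegral_mono fun x => ?_
  rw [← ENNReal.ofReal_mul (Real.rpow_nonneg hR.le _)]
  refine ENNReal.ofReal_le_ofReal ?_
  rw [mul_comm (R ^ (2*α))]
  refine mul_le_mul_of_nonneg_left ?_ (Real.rpow_nonneg (by positivity) _)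
  exact Real.rpow_le_rpow (le_min hR.le (by positivity)) (min_le_left _ _) (by positivity)

lemma Aint_le {s α R : ℝ} (hα : 0 < α) (hsα : α < s) (hR : 4 ≤ R) :
    Aint s α R ≤
      ENNReal.ofReal ((4:ℝ)^α) * (volume (closedBall (0:E2) 1) +
        ∫⁻ x : E2 in {x : E2 | ‖x‖ ∈ Icc 1 (R/2)}, ENNReal.ofReal (‖x‖ ^ (2*(α-s)))) +
      ENNReal.ofReal (R ^ (2*α)) *
        ∫⁻ x : E2 in {x : E2 | ‖x‖ ∈ Ici (R/4)}, ENNReal.ofReal (‖x‖ ^ (-(2*s))) := by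
  have hRpos : (0:ℝ) < R := by linarith
  set U : Set E2 := {x : E2 | 2 * Real.sqrt (1 + ‖x‖ ^ 2) ≤ R} with hU
  have hUm : MeasurableSet U := measurableSet_le (by fun_prop) measurable_const
  rw [Aint, ← lintegral_add_compl _ hUm]
  refine add_le_add ?_ ?_
  · -- piece on U
    have hcong : ∀ x ∈ U, ENNReal.ofReal ((1 + ‖x‖ ^ 2) ^ (-s) *
        min R (2 * Real.sqrt (1 + ‖x‖ ^ 2)) ^ (2 * α))
        = ENNReal.ofReal ((4:ℝ)^α) * ENNReal.ofReal ((1 + ‖x‖ ^ 2) ^ (α - s)) := by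
      intro x hx
      have hb : (0:ℝ) < 1 + ‖x‖ ^ 2 := by positivity
      have hsq : Real.sqrt (1 + ‖x‖ ^ 2) ^ 2 = 1 + ‖x‖ ^ 2 := Real.sq_sqrt hb.le
      have hsqnn : (0:ℝ) ≤ Real.sqrt (1 + ‖x‖ ^ 2) := Real.sqrt_nonneg _
      rw [← ENNReal.ofReal_mul (by positivity)]
      congr 1
      rw [min_eq_right hx]
      rw [Real.mul_rpow (by norm_num) hsqnn]
      have e1 : Real.sqrt (1 + ‖x‖ ^ 2) ^ (2*α) = (1 + ‖x‖ ^ 2) ^ α := by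
        rw [Real.rpow_mul hsqnn]
        congr 1
        rw [show (2:ℝ) = ((2:ℕ):ℝ) by norm_num, Real.rpow_natCast]
        exact hsq
      have e2 : (2:ℝ) ^ (2*α) = (4:ℝ)^α := by
        rw [show (4:ℝ) = 2^(2:ℝ) by norm_num [Real.rpow_natCast],
          ← Real.rpow_mul (by norm_num)]
      rw [e1, e2, show (1 + ‖x‖ ^ 2) ^ (-s) * ((4:ℝ)^α * (1 + ‖x‖ ^ 2) ^ α)
          = (4:ℝ)^α * ((1 + ‖x‖ ^ 2) ^ (-s) * (1 + ‖x‖ ^ 2) ^ α) by ring,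
        ← Real.rpow_add hb, show -s + α = α - s by ring]
    rw [setLIntegral_congr_fun hUm hcong,
      lintegral_const_mul' _ _ ENNReal.ofReal_ne_top]
    refine mul_le_mul_right ?_ _
    have hsub : U ⊆ closedBall (0:E2) 1 ∪ {x : E2 | ‖x‖ ∈ Icc 1 (R/2)} := by
      intro x hx
      by_cases h1 : ‖x‖ ≤ 1
      · exact Or.inl (mem_closedBall_zero_iff.2 h1)
      · refine Or.inr ⟨le_of_not_ge h1, ?_⟩
        have h2 : ‖x‖ ≤ Real.sqrt (1 + ‖x‖ ^ 2) := norm_le_sqrt' x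
        have h3 : 2 * Real.sqrt (1 + ‖x‖ ^ 2) ≤ R := hx
        linarith
    refine le_trans (lintegral_mono' (Measure.restrict_mono hsub le_rfl) le_rfl) ?_
    refine le_trans (lintegral_union_le _ _ _) ?_
    refine add_le_add ?_ ?_
    · calc ∫⁻ x : E2 in closedBall (0:E2) 1, ENNReal.ofReal ((1 + ‖x‖ ^ 2) ^ (α - s))
          ≤ ∫⁻ _ : E2 in closedBall (0:E2) 1, 1 := by
            refine lintegral_mono fun x => ?_
            exact ENNReal.ofReal_le_one.2
              (Real.rpow_le_one_of_one_le_of_nonpos (by nlinarith [sq_nonneg ‖x‖])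
                (by linarith))
        _ = volume (closedBall (0:E2) 1) := setLIntegral_one _
    · refine setLIntegral_mono' (measurable_norm measurableSet_Icc) fun x hx => ?_
      refine ENNReal.ofReal_le_ofReal ?_
      have hx1 : (1:ℝ) ≤ ‖x‖ := hx.1
      have h1 : (1 + ‖x‖ ^ 2) ^ (α - s) ≤ (‖x‖ ^ 2) ^ (α - s) :=
        Real.rpow_le_rpow_of_nonpos (by nlinarith) (by nlinarith) (by linarith)
      refine le_trans h1 (le_of_eq ?_)
      rw [← Real.rpow_natCast ‖x‖ 2, ← Real.rpow_mul (norm_nonneg x)]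
      norm_num
  · -- piece on Uᶜ
    have hpt : ∀ x ∈ Uᶜ, ENNReal.ofReal ((1 + ‖x‖ ^ 2) ^ (-s) *
        min R (2 * Real.sqrt (1 + ‖x‖ ^ 2)) ^ (2 * α))
        ≤ ENNReal.ofReal (R ^ (2*α)) * ENNReal.ofReal (‖x‖ ^ (-(2*s))) := by
      intro x hx
      have hxU : R < 2 * Real.sqrt (1 + ‖x‖ ^ 2) := lt_of_not_ge hx
      have hsq : Real.sqrt (1 + ‖x‖ ^ 2) ^ 2 = 1 + ‖x‖ ^ 2 :=
        Real.sq_sqrt (by positivity)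
      have hsqnn : (0:ℝ) ≤ Real.sqrt (1 + ‖x‖ ^ 2) := Real.sqrt_nonneg _
      have hxn : R/4 ≤ ‖x‖ := by nlinarith [norm_nonneg x]
      have hx1 : (1:ℝ) ≤ ‖x‖ := by linarith
      rw [min_eq_left hxU.le, ← ENNReal.ofReal_mul (Real.rpow_nonneg hRpos.le _)]
      refine ENNReal.ofReal_le_ofReal ?_
      rw [mul_comm ((1 + ‖x‖ ^ 2) ^ (-s))]
      refine mul_le_mul_of_nonneg_left ?_ (Real.rpow_nonneg hRpos.le _)
      have h1 : (1 + ‖x‖ ^ 2) ^ (-s) ≤ (‖x‖ ^ 2) ^ (-s) :=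
        Real.rpow_le_rpow_of_nonpos (by nlinarith) (by nlinarith)
          (by linarith)
      refine le_trans h1 (le_of_eq ?_)
      rw [← Real.rpow_natCast ‖x‖ 2, ← Real.rpow_mul (norm_nonneg x)]
      norm_num
    refine le_trans (setLIntegral_mono' hUm.compl hpt) ?_
    have hsub2 : Uᶜ ⊆ {x : E2 | ‖x‖ ∈ Ici (R/4)} := by
      intro x hx
      have hxU : R < 2 * Real.sqrt (1 + ‖x‖ ^ 2) := lt_of_not_ge hx
      have hsq : Real.sqrt (1 + ‖x‖ ^ 2) ^ 2 = 1 + ‖x‖ ^ 2 :=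
        Real.sq_sqrt (by positivity)
      have hsqnn : (0:ℝ) ≤ Real.sqrt (1 + ‖x‖ ^ 2) := Real.sqrt_nonneg _
      exact (by nlinarith [norm_nonneg x] : R/4 ≤ ‖x‖)
    refine le_trans (lintegral_mono' (Measure.restrict_mono hsub2 le_rfl) le_rfl) ?_
    rw [lintegral_const_mul' _ _ ENNReal.ofReal_ne_top]

-- the tail integral value
lemma tail_val {s T : ℝ} (hs : 1 < s) (hT : 1 ≤ T) :
    ∫⁻ x : E2 in {x : E2 | ‖x‖ ∈ Ici T}, ENNReal.ofReal (‖x‖ ^ (-(2*s))) =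
      ENNReal.ofReal (2 * ((volume (ball (0:E2) 1)).toReal *
        (T ^ (2-2*s) / (2*s-2)))) := by
  have hTpos : (0:ℝ) < T := lt_of_lt_of_le zero_lt_one hT
  rw [tail_eq (by linarith) hT]
  congr 3
  rw [integral_Ioi_rpow_of_lt (by linarith) hTpos]
  rw [show -(2*s) + 1 + 1 = 2-2*s by ring]
  have h1 : (2:ℝ)-2*s ≠ 0 := by linarith
  have h2 : (2:ℝ)*s-2 ≠ 0 := by linarith
  field_simp
  ring_nf
  rw [show (-1:ℝ)+s = -(1-s) by ring, inv_neg]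

lemma ann_val_pow {s α T : ℝ} (hα : 0 < α) (hsα : α < s) (hs' : s < α + 1) (hT : 1 ≤ T) :
    ∫⁻ x : E2 in {x : E2 | ‖x‖ ∈ Icc 1 T}, ENNReal.ofReal (‖x‖ ^ (2*(α-s))) =
      ENNReal.ofReal (2 * ((volume (ball (0:E2) 1)).toReal *
        ((T ^ (2*(α-s)+2) - 1) / (2*(α-s)+2)))) := by
  rw [ann_eq (by linarith) hT]
  congr 3
  rw [integral_rpow (Or.inl (by linarith))]
  rw [show 2*(α-s) + 1 + 1 = 2*(α-s)+2 by ring, Real.one_rpow]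

lemma ann_val_log {α T : ℝ} (hT : 1 ≤ T) :
    ∫⁻ x : E2 in {x : E2 | ‖x‖ ∈ Icc 1 T}, ENNReal.ofReal (‖x‖ ^ (2*(α-(α+1)))) =
      ENNReal.ofReal (2 * ((volume (ball (0:E2) 1)).toReal * Real.log T)) := by
  rw [show 2*(α-(α+1)) = (-2:ℝ) by ring]
  rw [ann_eq (by norm_num) hT]
  congr 3
  rw [show (-2:ℝ) + 1 = -1 by norm_num]
  rw [intervalIntegral.integral_congr (g := fun y => 1/y) ?_]
  · rw [integral_one_div ?_, div_one]
    rw [Set.uIcc_of_le hT]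
    intro h
    exact absurd h.1 (by norm_num)
  · intro y hy
    rw [Set.uIcc_of_le hT] at hy
    have : (0:ℝ) < y := lt_of_lt_of_le zero_lt_one hy.1
    show y ^ (-1:ℝ) = 1 / y
    rw [Real.rpow_neg_one, one_div]

lemma Aint_pow_bound {s α : ℝ} (hα : 0 < α) (hsα : α < s) (hs : 1 < s) (hs' : s < α+1) :
    ∃ C : ℝ, 0 ≤ C ∧ ∀ R : ℝ, 4 ≤ R →
      Aint s α R ≤ ENNReal.ofReal (C * R ^ (2*(α-s)+2)) := by
  set κ := (volume (ball (0:E2) 1)).toReal with hκ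
  set v0 := (volume (closedBall (0:E2) 1)).toReal with hv0
  have hκ0 : 0 ≤ κ := ENNReal.toReal_nonneg
  have hv00 : 0 ≤ v0 := ENNReal.toReal_nonneg
  have he0 : (0:ℝ) < 2*(α-s)+2 := by linarith
  have hden : (0:ℝ) < 2*s-2 := by linarith
  refine ⟨(4:ℝ)^α * (v0 + 2*(κ*(1/(2*(α-s)+2)))) +
    2*(κ*((4:ℝ)^(2*s-2)/(2*s-2))), by positivity, ?_⟩
  intro R hR
  have hRpos : (0:ℝ) < R := by linarith
  have hT2 : (1:ℝ) ≤ R/2 := by linarith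
  have hT4 : (1:ℝ) ≤ R/4 := by linarith
  refine le_trans (Aint_le hα hsα hR) ?_
  rw [ann_val_pow hα hsα hs' hT2, tail_val hs hT4, ← hκ]
  have hvne : volume (closedBall (0:E2) 1) ≠ ⊤ := measure_closedBall_lt_top.ne
  rw [show volume (closedBall (0:E2) 1) = ENNReal.ofReal v0 by
    rw [hv0, ENNReal.ofReal_toReal hvne]]
  have h12 : (1:ℝ) ≤ (R/2) ^ (2*(α-s)+2) := by
    calc (1:ℝ) = 1 ^ (2*(α-s)+2) := (Real.one_rpow _).symm
    _ ≤ (R/2) ^ (2*(α-s)+2) := Real.rpow_le_rpow zero_le_one hT2 he0.le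
  have hc0 : (0:ℝ) ≤ 2*(κ*(((R/2) ^ (2*(α-s)+2) - 1)/(2*(α-s)+2))) := by
    have : (0:ℝ) ≤ ((R/2) ^ (2*(α-s)+2) - 1)/(2*(α-s)+2) := by
      apply div_nonneg (by linarith) he0.le
    positivity
  rw [← ENNReal.ofReal_add hv00 hc0,
    ← ENNReal.ofReal_mul (by positivity : (0:ℝ) ≤ (4:ℝ)^α),
    ← ENNReal.ofReal_mul (Real.rpow_nonneg hRpos.le _),
    ← ENNReal.ofReal_add (by positivity) (by positivity)]
  refine ENNReal.ofReal_le_ofReal ?_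
  -- now a real inequality
  have f1 : (R/2) ^ (2*(α-s)+2) ≤ R ^ (2*(α-s)+2) :=
    Real.rpow_le_rpow (by positivity) (by linarith) he0.le
  have f2 : (1:ℝ) ≤ R ^ (2*(α-s)+2) := by
    calc (1:ℝ) = 1 ^ (2*(α-s)+2) := (Real.one_rpow _).symm
    _ ≤ R ^ (2*(α-s)+2) := Real.rpow_le_rpow zero_le_one (by linarith) he0.le
  have f3 : R^(2*α) * (R/4)^(2-2*s) = 4^(2*s-2) * R ^ (2*(α-s)+2) := by
    rw [Real.div_rpow hRpos.le (by norm_num : (0:ℝ) ≤ 4),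
      div_eq_mul_inv, ← Real.rpow_neg (by norm_num : (0:ℝ) ≤ 4),
      show -(2-2*s) = 2*s-2 by ring, ← mul_assoc, ← Real.rpow_add hRpos,
      show 2*α+(2-2*s) = 2*(α-s)+2 by ring]
    ring
  have hA1 : v0 ≤ v0 * R ^ (2*(α-s)+2) := le_mul_of_one_le_right hv00 f2
  have hA2 : ((R/2) ^ (2*(α-s)+2) - 1)/(2*(α-s)+2) ≤
      (1/(2*(α-s)+2)) * R ^ (2*(α-s)+2) := by
    rw [one_div, inv_mul_eq_div]
    exact (div_le_div_iff_of_pos_right he0).mpr (by linarith)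
  have p1 : (0:ℝ) ≤ (4:ℝ)^α := by positivity
  have p2 := mul_le_mul_of_nonneg_left hA1 p1
  have p3 := mul_le_mul_of_nonneg_left hA2
    (by positivity : (0:ℝ) ≤ (4:ℝ)^α * (2*κ))
  have hBeq : R^(2*α) * (2*(κ*((R/4)^(2-2*s)/(2*s-2)))) =
      2*(κ*((4:ℝ)^(2*s-2)/(2*s-2))) * R ^ (2*(α-s)+2) := by
    rw [show R^(2*α) * (2*(κ*((R/4)^(2-2*s)/(2*s-2)))) =
      2*κ/(2*s-2) * (R^(2*α) * (R/4)^(2-2*s)) by ring, f3]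
    ring
  nlinarith [p2, p3, hBeq]

lemma Aint_log_bound {α : ℝ} (hα : 0 < α) :
    ∃ C : ℝ, 0 ≤ C ∧ ∀ R : ℝ, 8 ≤ R →
      Aint (α+1) α R ≤ ENNReal.ofReal (C * Real.log R) := by
  set κ := (volume (ball (0:E2) 1)).toReal with hκ
  set v0 := (volume (closedBall (0:E2) 1)).toReal with hv0
  have hκ0 : 0 ≤ κ := ENNReal.toReal_nonneg
  have hv00 : 0 ≤ v0 := ENNReal.toReal_nonneg
  have hden : (0:ℝ) < 2*(α+1)-2 := by linarith
  refine ⟨(4:ℝ)^α * (v0 + 2*κ) +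
    2*(κ*((4:ℝ)^(2*(α+1)-2)/(2*(α+1)-2))), by positivity, ?_⟩
  intro R hR
  have hRpos : (0:ℝ) < R := by linarith
  have hT2 : (1:ℝ) ≤ R/2 := by linarith
  have hT4 : (1:ℝ) ≤ R/4 := by linarith
  have hs : (1:ℝ) < α + 1 := by linarith
  refine le_trans (Aint_le hα (by linarith) (by linarith)) ?_
  rw [ann_val_log hT2, tail_val hs hT4, ← hκ]
  have hvne : volume (closedBall (0:E2) 1) ≠ ⊤ := measure_closedBall_lt_top.ne
  rw [show volume (closedBall (0:E2) 1) = ENNReal.ofReal v0 by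
    rw [hv0, ENNReal.ofReal_toReal hvne]]
  have hlogR2 : (0:ℝ) ≤ Real.log (R/2) := Real.log_nonneg hT2
  rw [← ENNReal.ofReal_add hv00 (by positivity),
    ← ENNReal.ofReal_mul (by positivity : (0:ℝ) ≤ (4:ℝ)^α),
    ← ENNReal.ofReal_mul (Real.rpow_nonneg hRpos.le _),
    ← ENNReal.ofReal_add (by positivity) (by positivity)]
  refine ENNReal.ofReal_le_ofReal ?_
  have hlog1 : (1:ℝ) ≤ Real.log R := by
    rw [Real.le_log_iff_exp_le hRpos]
    calc Real.exp 1 ≤ 2.7182818286 := Real.exp_one_lt_d9.le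
    _ ≤ R := by linarith
  have hlog2 : Real.log (R/2) ≤ Real.log R :=
    Real.log_le_log (by positivity) (by linarith)
  have f3 : R^(2*α) * (R/4)^(2-2*(α+1)) = 4^(2*(α+1)-2) := by
    rw [Real.div_rpow hRpos.le (by norm_num : (0:ℝ) ≤ 4),
      div_eq_mul_inv, ← Real.rpow_neg (by norm_num : (0:ℝ) ≤ 4),
      show -(2-2*(α+1)) = 2*(α+1)-2 by ring, ← mul_assoc, ← Real.rpow_add hRpos,
      show 2*α+(2-2*(α+1)) = 0 by ring, Real.rpow_zero, one_mul]
  have p1 : (0:ℝ) ≤ (4:ℝ)^α := by positivity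
  have hA1 : v0 ≤ v0 * Real.log R := le_mul_of_one_le_right hv00 hlog1
  have p2 := mul_le_mul_of_nonneg_left hA1 p1
  have p3 := mul_le_mul_of_nonneg_left hlog2
    (by positivity : (0:ℝ) ≤ (4:ℝ)^α * (2*κ))
  have hBeq : R^(2*α) * (2*(κ*((R/4)^(2-2*(α+1))/(2*(α+1)-2)))) =
      2*(κ*((4:ℝ)^(2*(α+1)-2)/(2*(α+1)-2))) := by
    rw [show R^(2*α) * (2*(κ*((R/4)^(2-2*(α+1))/(2*(α+1)-2)))) =
      2*κ/(2*(α+1)-2) * (R^(2*α) * (R/4)^(2-2*(α+1))) by ring, f3]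
    ring
  have hB2 : 2*(κ*((4:ℝ)^(2*(α+1)-2)/(2*(α+1)-2))) ≤
      2*(κ*((4:ℝ)^(2*(α+1)-2)/(2*(α+1)-2))) * Real.log R :=
    le_mul_of_one_le_right (by positivity) hlog1
  nlinarith [p2, p3, hBeq, hB2]

end Stmt7Aux

open Stmt7Aux in
/- For `α > 0`, `α < s ≤ α + 1`, `s > 1`: `I(r)` is finite for `0 < r ≤ 1` and, as `r ↓ 0`,
`I(r) = O(r^{2(s−α−1)})` if `α < s < α+1` and `I(r) = O(log(1/r))` if `s = α+1`. -/
theorem stmt7 (α s : ℝ) (hα : 0 < α) (h1 : α < s) (h2 : s ≤ α + 1) (h3 : 1 < s) :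
    (∀ r : ℝ, 0 < r → r ≤ 1 → stmt7I s α r < ⊤) ∧
    (s < α + 1 → ∃ C : ℝ, ∃ r0 > (0 : ℝ), ∀ r : ℝ, 0 < r → r ≤ r0 →
      stmt7I s α r ≤ ENNReal.ofReal (C * r ^ (2 * (s - α - 1)))) ∧
    (s = α + 1 → ∃ C : ℝ, ∃ r0 > (0 : ℝ), ∀ r : ℝ, 0 < r → r ≤ r0 →
      stmt7I s α r ≤ ENNReal.ofReal (C * Real.log (1 / r))) := by
  have hB := Bint_lt_top h3
  have hAfin : ∀ r : ℝ, 0 < r → Aint s α (1/r) ≠ ⊤ := fun r hr =>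
    (lt_of_le_of_lt (Aint_crude hα (by positivity))
      (ENNReal.mul_lt_top ENNReal.ofReal_lt_top hB)).ne
  refine ⟨?_, ?_, ?_⟩
  · intro r hr _
    refine lt_of_le_of_lt (master hα hr hB.ne (hAfin r hr)) ?_
    exact ENNReal.mul_lt_top
      (ENNReal.mul_lt_top (by norm_num) (lt_top_iff_ne_top.2 (hAfin r hr))) hB
  · intro hs'
    obtain ⟨C0, hC0, hbound⟩ := Aint_pow_bound hα h1 h3 hs'
    set b := (Bint s).toReal with hb
    have hb0 : 0 ≤ b := ENNReal.toReal_nonneg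
    refine ⟨2*C0*b, 1/4, by norm_num, ?_⟩
    intro r hr hr4
    have hR4 : (4:ℝ) ≤ 1/r := by
      rw [le_div_iff₀ hr]; linarith
    refine le_trans (master hα hr hB.ne (hAfin r hr)) ?_
    calc 2 * Aint s α (1/r) * Bint s
        ≤ 2 * ENNReal.ofReal (C0 * (1/r)^(2*(α-s)+2)) * ENNReal.ofReal b := by
          refine mul_le_mul' (mul_le_mul' le_rfl (hbound _ hR4)) (le_of_eq ?_)
          rw [hb, ENNReal.ofReal_toReal hB.ne]
      _ = ENNReal.ofReal (2*C0*b * r^(2*(s-α-1))) := by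
          rw [show (2:ENNReal) = ENNReal.ofReal 2 from (ENNReal.ofReal_ofNat 2).symm,
            ← ENNReal.ofReal_mul (by norm_num),
            ← ENNReal.ofReal_mul (by positivity)]
          congr 1
          have hrr : (1/r) ^ (2*(α-s)+2) = r ^ (2*(s-α-1)) := by
            rw [one_div, ← Real.rpow_neg_one r,
              ← Real.rpow_mul hr.le, show (-1:ℝ) * (2*(α-s)+2) = 2*(s-α-1) by ring]
          rw [hrr]; ring
  · intro hseq
    subst hseq
    obtain ⟨C0, hC0, hbound⟩ := Aint_log_bound hα
    set b := (Bint (α+1)).toReal with hb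
    have hb0 : 0 ≤ b := ENNReal.toReal_nonneg
    refine ⟨2*C0*b, 1/8, by norm_num, ?_⟩
    intro r hr hr8
    have hR8 : (8:ℝ) ≤ 1/r := by
      rw [le_div_iff₀ hr]; linarith
    have hlog0 : 0 ≤ Real.log (1/r) := Real.log_nonneg (by linarith)
    refine le_trans (master hα hr hB.ne (hAfin r hr)) ?_
    calc 2 * Aint (α+1) α (1/r) * Bint (α+1)
        ≤ 2 * ENNReal.ofReal (C0 * Real.log (1/r)) * ENNReal.ofReal b := by
          refine mul_le_mul' (mul_le_mul' le_rfl (hbound _ hR8)) (le_of_eq ?_)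
          rw [hb, ENNReal.ofReal_toReal hB.ne]
      _ = ENNReal.ofReal (2*C0*b * Real.log (1/r)) := by
          rw [show (2:ENNReal) = ENNReal.ofReal 2 from (ENNReal.ofReal_ofNat 2).symm,
            ← ENNReal.ofReal_mul (by norm_num),
            ← ENNReal.ofReal_mul (by positivity)]
          congr 1
          ring
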